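/- Let R be a Noetherian ring, let f ∈ R, let J ⊆ R be an ideal, and let k = ar_J((f)) be the Artin–Rees number of the principal ideal (f) with respect to J. Then for every n ≥ k, (J^n : f) = J^{n−k}(J^k : f) + (0 : f). -/

import Mathlib

open IsLocalRing

/-- An element `f` of a Noetherian local ring `R` is filter-regular if `f ∉ P` for every
associated prime `P` of `R` other than the maximal ideal. -/
def IsFilterRegularElem {R : Type*} [CommRing R] [IsLocalRing R] (f : R) : Prop :=
  ∀ P ∈ associatedPrimes R R, P ≠ maximalIdeal R → f ∉ P

/-- The image of `f` in `R ⧸ I` is a filter-regular element: `f` avoids all associated primes of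
the `R`-module `R ⧸ I` except the maximal ideal. -/
def IsFilterRegularOn {R : Type*} [CommRing R] [IsLocalRing R] (I : Ideal R) (f : R) : Prop :=
  ∀ P ∈ associatedPrimes R (R ⧸ I), P ≠ maximalIdeal R → f ∉ P

/-- `f 0, f 1, …` is a filter-regular sequence: each `f i` is filter-regular modulo the ideal
generated by the preceding elements. -/
def IsFilterRegularSeq {R : Type*} [CommRing R] [IsLocalRing R] {r : ℕ} (f : Fin r → R) : Prop :=
  ∀ i : Fin r, IsFilterRegularOn (Ideal.span (f '' {j | j < i})) (f i)

/-- The length of an `R`-module `M`, i.e. the supremum of lengths of strictly increasing chains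
of submodules of `M`. -/
noncomputable def moduleLength (R M : Type*) [Ring R] [AddCommGroup M] [Module R M] :
    WithBot ℕ∞ :=
  Order.krullDim (Submodule R M)

/-- The Artin–Rees number of `I` with respect to `J`: the least `s` with
`J ^ n ⊓ I = J ^ (n - s) * (J ^ s ⊓ I)` for all `n ≥ s`. -/
noncomputable def arNumber {R : Type*} [CommRing R] (J I : Ideal R) : ℕ :=
  sInf {s : ℕ | ∀ n ≥ s, J ^ n ⊓ I = J ^ (n - s) * (J ^ s ⊓ I)}

open RingTheory.Sequence in
/-- The depth of a Noetherian local ring: the supremum of lengths of regular sequences contained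
in the maximal ideal. -/
noncomputable def ringDepth (S : Type*) [CommRing S] [IsLocalRing S] : ℕ∞ :=
  sSup {n : ℕ∞ | ∃ l : List S,
    (∀ x ∈ l, x ∈ maximalIdeal S) ∧ IsRegular S l ∧ (l.length : ℕ∞) = n}

/-- A local ring is Cohen–Macaulay if its depth equals its Krull dimension. -/
def IsCMLocal (S : Type*) [CommRing S] [IsLocalRing S] : Prop :=
  (ringDepth S : WithBot ℕ∞) = ringKrullDim S

/-- A (not necessarily local) ring is Cohen–Macaulay if it is Noetherian and all of its
localizations at primes are Cohen–Macaulay local rings. -/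
def IsCMRing (S : Type*) [CommRing S] : Prop :=
  IsNoetherianRing S ∧ ∀ (P : Ideal S) (hP : P.IsPrime),
    letI := hP
    IsCMLocal (Localization.AtPrime P)

/-- `aIdealAt S n = ∏_{i = 0}^{dim S - 1} Ann H_n^i(S)`, the product of the annihilators of the
local cohomology modules of `S` supported at `n`, in degrees strictly below `dim S`. -/
noncomputable def aIdealAt (S : Type u) [CommRing S] (n : Ideal S) : Ideal S :=
  ∏ i ∈ Finset.range (ENat.toNat ((ringKrullDim S).unbotD 0)),
    Module.annihilator S ((localCohomology n i).obj (ModuleCat.of S S))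

/-- The non Cohen–Macaulay locus: primes `P` such that `S_P` is not Cohen–Macaulay. -/
def NCM (S : Type*) [CommRing S] : Set (Ideal S) :=
  {P | ∃ hP : P.IsPrime, ¬ (letI := hP; IsCMLocal (Localization.AtPrime P))}

/-- The dimension of the non Cohen–Macaulay locus: `sup {dim S/P : P ∈ NCM S}`. -/
noncomputable def dimNCM (S : Type*) [CommRing S] : WithBot ℕ∞ :=
  ⨆ P ∈ NCM S, ringKrullDim (S ⧸ P)

/-- With `k = ar_J((f))`, for all `n ≥ k` one has `(J^n : f) = J^{n-k}(J^k : f) + (0 : f)`. -/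
theorem colon_power_eq
    {R : Type*} [CommRing R] [IsNoetherianRing R] (f : R) (J : Ideal R) :
    ∀ n : ℕ, arNumber J (Ideal.span {f}) ≤ n →
      Submodule.colon (J ^ n) (Ideal.span {f}) =
        J ^ (n - arNumber J (Ideal.span {f})) *
            Submodule.colon (J ^ arNumber J (Ideal.span {f})) (Ideal.span {f}) +
          Submodule.colon (⊥ : Ideal R) (Ideal.span {f}) := by
  set I := Ideal.span {f} with hI
  set k := arNumber J I with hk
  -- the Artin–Rees property holds for k
  have hS : {s : ℕ | ∀ n ≥ s, J ^ n ⊓ I = J ^ (n - s) * (J ^ s ⊓ I)}.Nonempty := by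
    obtain ⟨s, hs⟩ := Ideal.exists_pow_inf_eq_pow_smul J (I : Submodule R R)
    refine ⟨s, fun n hn => ?_⟩
    have := hs n hn
    simpa [smul_eq_mul, Ideal.mul_top] using this
  have hAR : ∀ n ≥ k, J ^ n ⊓ I = J ^ (n - k) * (J ^ k ⊓ I) := Nat.sInf_mem hS
  -- colon lemma
  have colon_mul : ∀ K : Ideal R, Submodule.colon K I * I = K ⊓ I := by
    intro K
    apply le_antisymm
    · rw [Ideal.mul_le]
      intro c hc i hi
      refine ⟨?_, I.mul_mem_left c hi⟩
      simpa using Submodule.mem_colon.mp hc i hi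
    · intro c hc
      obtain ⟨hcK, hcI⟩ := hc
      obtain ⟨b, rfl⟩ := Ideal.mem_span_singleton'.mp hcI
      exact Ideal.mul_mem_mul (Submodule.mem_colon_span_singleton.mpr (by simpa [smul_eq_mul] using hcK))
        (Ideal.mem_span_singleton_self f)
  intro n hn
  apply le_antisymm
  · intro x hx
    have hxf : x * f ∈ J ^ n ⊓ I := by
      refine ⟨by simpa using Submodule.mem_colon_span_singleton.mp hx, I.mul_mem_left x (Ideal.mem_span_singleton_self f)⟩
    rw [hAR n hn, ← colon_mul (J ^ k), ← mul_assoc] at hxf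
    obtain ⟨a, ha, hafx⟩ := Ideal.mem_mul_span_singleton.mp hxf
    have hza : x - a ∈ Submodule.colon (⊥ : Ideal R) I := by
      refine Submodule.mem_colon_span_singleton.mpr ?_
      simp only [smul_eq_mul, Submodule.mem_bot, sub_mul, hafx, sub_self]
    have : x = a + (x - a) := by ring
    rw [this]
    exact Submodule.add_mem_sup ha hza
  · apply sup_le
    · intro a ha
      refine Submodule.mem_colon_span_singleton.mpr ?_
      have : a * f ∈ (J ^ (n - k) * Submodule.colon (J ^ k) I) * I :=
        Ideal.mul_mem_mul ha (Ideal.mem_span_singleton_self f)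
      rw [mul_assoc, colon_mul (J ^ k)] at this
      have h2 : J ^ (n - k) * (J ^ k ⊓ I) ≤ J ^ n := by
        calc J ^ (n - k) * (J ^ k ⊓ I) ≤ J ^ (n - k) * J ^ k := Ideal.mul_mono_right inf_le_left
        _ = J ^ n := by rw [← pow_add, Nat.sub_add_cancel hn]
      simpa using h2 this
    · intro z hz
      refine Submodule.mem_colon_span_singleton.mpr ?_
      have := Submodule.mem_colon_span_singleton.mp hz
      simp only [Submodule.mem_bot, smul_eq_mul] at this
      simp [this]
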